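/- Let F be a field of characteristic different from 2, let d be a positive integer, and let W be a subspace of F^d with dim(W) < ⌈d/2⌉. Then there exists a vector x ∈ W^⊥ with ⟨x,x⟩ ≠ 0. -/

import Mathlib

/-- char ≠ 2, dim W < ⌈d/2⌉ implies W^⊥ contains a non-self-orthogonal vector. -/
theorem stmt_2 (F : Type*) [Field F] (h2 : (2 : F) ≠ 0) (d : ℕ) (hd : 1 ≤ d)
    (W : Submodule F (Fin d → F)) (hW : Module.finrank F W < (d + 1) / 2) :
    ∃ x : Fin d → F, (∀ y ∈ W, ∑ t, x t * y t = 0) ∧ ∑ t, x t * x t ≠ 0 := by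
  set B : LinearMap.BilinForm F (Fin d → F) := LinearMap.mk₂ F (fun x y => ∑ t, x t * y t)
    (by intro x x' y; simp [add_mul, Finset.sum_add_distrib])
    (by intro c x y; simp [Finset.mul_sum, mul_assoc])
    (by intro x y y'; simp [mul_add, Finset.sum_add_distrib])
    (by intro c x y; simp [Finset.mul_sum, mul_comm, mul_assoc, mul_left_comm]) with hBdef
  have hBapp : ∀ x y, B x y = ∑ t, x t * y t := fun x y => rfl
  have hsymm : B.IsSymm := by
    refine ⟨?_⟩; intro x y; simp only [hBapp]; exact Finset.sum_congr rfl fun t _ => mul_comm _ _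
  have hrefl : B.IsRefl := hsymm.isRefl
  have hnd : B.Nondegenerate := by
    constructor <;>
    · intro m hm
      funext i
      have := hm (Pi.single i 1)
      simpa [hBapp, Pi.single_apply, mul_comm] using this
  by_contra hcon
  push_neg at hcon
  -- every element of the orthogonal complement is isotropic
  have hiso : ∀ x ∈ B.orthogonal W, B x x = 0 := by
    intro x hx
    by_contra hne
    refine hne (hcon x ?_)
    intro y hy
    exact hrefl _ _ ((LinearMap.BilinForm.mem_orthogonal_iff.mp hx) y hy)
  -- hence the orthogonal complement is totally isotropic
  have hle : B.orthogonal W ≤ B.orthogonal (B.orthogonal W) := by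
    intro x hx
    rw [LinearMap.BilinForm.mem_orthogonal_iff]
    intro y hy
    have h1 : B (x + y) (x + y) = 0 :=
      hiso _ (Submodule.add_mem _ hx hy)
    have hxy : B x y = B y x := hsymm.eq x y
    have h3 : B x x = 0 := hiso _ hx
    have h4 : B y y = 0 := hiso _ hy
    have hexp : B (x + y) (x + y) = B x x + B x y + B y x + B y y := by
      simp [map_add, LinearMap.add_apply]; ring
    rw [hexp, h3, h4, ← hxy, add_zero, zero_add, ← two_mul] at h1
    have : B x y = 0 := by
      rcases mul_eq_zero.mp h1 with h | h
      · exact absurd h h2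
      · exact h
    exact hrefl _ _ this
  have hfd : Module.finrank F (Fin d → F) = d := by simp
  have hk : Module.finrank F W ≤ d := by have := Submodule.finrank_le W; rwa [hfd] at this
  have hdim1 : Module.finrank F (B.orthogonal W) = d - Module.finrank F W := by
    rw [LinearMap.BilinForm.finrank_orthogonal hnd, hfd]
  have hdim2 : Module.finrank F (B.orthogonal (B.orthogonal W))
      = d - (d - Module.finrank F W) := by
    rw [LinearMap.BilinForm.finrank_orthogonal hnd, hfd, hdim1]
  have hmono := Submodule.finrank_mono hle
  rw [hdim1, hdim2] at hmono
  omega
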